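/- Let c > 0, α ∈ (0,1), ε > 0, M ≥ 0 with M·ε^{1-α} < c, Φ̄ > 1, and t₀ ≥ 0. Let V : [t₀,∞) → [0,∞) be differentiable with V(t₀) ≤ ε/2, and suppose that for every t ≥ t₀ with (1 - 1/Φ̄)·ε·e^{-M(t-t₀)} ≤ V(t) ≤ ε·e^{-M(t-t₀)} one has V'(t) ≤ -c·V(t)^α. Then V(t) < ε·e^{-M(t-t₀)} for all t ≥ t₀; in particular V(t) converges to 0 as t → ∞ with exponential rate M. -/

import Mathlib

/-- exponential-decay corollary. With the exponential barrier
`η(t) = ε e^{-M(t-t₀)}`, once `V(t₀) ≤ ε/2` and the differential inequality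
holds in the critical band, the Lyapunov value stays strictly below the
exponentially decaying barrier for all `t ≥ t₀`. -/
theorem stmt_3
    (c α ε M Φ t₀ : ℝ)
    (hc : 0 < c) (hα : α ∈ Set.Ioo (0 : ℝ) 1) (hε : 0 < ε) (hM : 0 ≤ M)
    (hMε : M * ε ^ (1 - α) < c) (hΦ : 1 < Φ) (ht₀ : 0 ≤ t₀)
    (V V' : ℝ → ℝ)
    (hVnonneg : ∀ t, t₀ ≤ t → 0 ≤ V t)
    (hVderiv : ∀ t, t₀ ≤ t → HasDerivWithinAt V (V' t) (Set.Ici t₀) t)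
    (hV0 : V t₀ ≤ ε / 2)
    (hVineq : ∀ t, t₀ ≤ t →
      (1 - 1 / Φ) * (ε * Real.exp (-M * (t - t₀))) ≤ V t →
      V t ≤ ε * Real.exp (-M * (t - t₀)) →
      V' t ≤ -c * V t ^ α) :
    ∀ t, t₀ ≤ t → V t < ε * Real.exp (-M * (t - t₀)) := by
  obtain ⟨hα0, hα1⟩ := hα
  set θ : ℝ := max (1/2) (1 - 1/Φ) with hθdef
  have hθhalf : (1/2 : ℝ) ≤ θ := le_max_left _ _
  have hθ0 : 0 < θ := lt_of_lt_of_le (by norm_num) hθhalf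
  have hΦpos : 0 < 1/Φ := by positivity
  have hθ1 : θ < 1 := max_lt (by norm_num) (by linarith)
  have hθΦ : 1 - 1/Φ ≤ θ := le_max_right _ _
  -- key scalar inequality
  have keyineq : ∀ y : ℝ, 0 < y → y ≤ ε → M * y < c * y ^ α := by
    intro y hy0 hyε
    have h1 : y ^ (1 - α) ≤ ε ^ (1 - α) :=
      Real.rpow_le_rpow hy0.le hyε (by linarith)
    have h2 : M * y ^ (1 - α) < c :=
      lt_of_le_of_lt (by nlinarith) hMε
    have h3 : y ^ (1 - α) * y ^ α = y := by
      rw [← Real.rpow_add hy0]; simp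
    have h4 : 0 < y ^ α := Real.rpow_pos_of_pos hy0 α
    calc M * y = (M * y ^ (1 - α)) * y ^ α := by rw [mul_assoc, h3]
      _ < c * y ^ α := mul_lt_mul_of_pos_right h2 h4
  set B : ℝ → ℝ := fun x => θ * (ε * Real.exp (-M * (x - t₀))) with hBdef
  have hexp_pos : ∀ x : ℝ, 0 < Real.exp (-M * (x - t₀)) := fun x => Real.exp_pos _
  have hexp1 : ∀ x, t₀ ≤ x → Real.exp (-M * (x - t₀)) ≤ 1 := by
    intro x hx
    rw [Real.exp_le_one_iff]
    nlinarith
  have hBderiv : ∀ x : ℝ, HasDerivAt B (-M * B x) x := by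
    intro x
    have h1 : HasDerivAt (fun x : ℝ => -M * (x - t₀)) (-M) x := by
      simpa using ((hasDerivAt_id x).sub_const t₀).const_mul (-M)
    have h2 : HasDerivAt (fun y : ℝ => θ * ε * Real.exp (-M * (y - t₀)))
        (θ * ε * (Real.exp (-M * (x - t₀)) * -M)) x := (h1.exp).const_mul (θ * ε)
    convert h2 using 1
    · funext y; simp [hBdef]; ring
    · simp [hBdef]; ring
  intro t ht
  have key : V t ≤ B t := by
    have := image_le_of_deriv_right_lt_deriv_boundary (a := t₀) (b := t)
      (f := V) (f' := V') (B := B) (B' := fun x => -M * B x)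
      (fun x hx => ((hVderiv x hx.1).continuousWithinAt).mono
        (Set.Icc_subset_Ici_self))
      (fun x hx => (hVderiv x hx.1).mono (Set.Ici_subset_Ici.2 hx.1))
      (by
        have : B t₀ = θ * ε := by simp [hBdef]
        rw [this]; nlinarith)
      hBderiv
      (by
        intro x hx hVB
        have hxt₀ : t₀ ≤ x := hx.1
        have hη : (0:ℝ) < ε * Real.exp (-M * (x - t₀)) := by positivity
        have hlow : (1 - 1/Φ) * (ε * Real.exp (-M * (x - t₀))) ≤ V x := by
          rw [hVB]
          exact mul_le_mul_of_nonneg_right hθΦ hη.le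
        have hhigh : V x ≤ ε * Real.exp (-M * (x - t₀)) := by
          rw [hVB]
          show θ * (ε * Real.exp (-M * (x - t₀))) ≤ _
          nlinarith
        have hV' := hVineq x hxt₀ hlow hhigh
        have hVx0 : 0 < V x := by
          rw [hVB]; show 0 < θ * (ε * Real.exp (-M * (x - t₀))); positivity
        have hVxε : V x ≤ ε := by
          have := hexp1 x hxt₀
          rw [hVB]
          show θ * (ε * Real.exp (-M * (x - t₀))) ≤ ε
          nlinarith
        have := keyineq (V x) hVx0 hVxε
        calc V' x ≤ -c * V x ^ α := hV'
          _ < -M * V x := by nlinarith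
          _ = -M * B x := by rw [hVB])
    exact this ⟨ht, le_refl t⟩
  have hBt : B t < ε * Real.exp (-M * (t - t₀)) := by
    have := hexp_pos t
    have : 0 < ε * Real.exp (-M * (t - t₀)) := by positivity
    calc B t = θ * (ε * Real.exp (-M * (t - t₀))) := rfl
      _ < 1 * (ε * Real.exp (-M * (t - t₀))) := mul_lt_mul_of_pos_right hθ1 this
      _ = _ := one_mul _
  exact lt_of_le_of_lt key hBt
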